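/- Let q be a prime power, let F_q be a finite field with q elements, and let n, k, δ, α be positive integers with α ≥ 2 and δ + k ≤ n. If C is an α-(n,k,δ)^c_q covering Grassmannian code, then every subspace W of F_q^n of dimension n − δ − k + 1 is contained in at most α − 1 of the subspaces V^⊥ with V ∈ C; that is, the orthogonal-complement code C^⊥ = {V^⊥ : V ∈ C} is such that each (n − δ − k + 1)-dimensional subspace of F_q^n lies in at most α − 1 of its members. -/

import Mathlib

open scoped Classical

/-- The orthogonal complement of a subspace of `F^n` with respect to the
standard symmetric bilinear form `b(x,y) = ∑ i, x i * y i`. -/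
def perp {F : Type*} [Field F] {n : ℕ}
    (V : Submodule F (Fin n → F)) : Submodule F (Fin n → F) where
  carrier := {x | ∀ v ∈ V, ∑ i, x i * v i = 0}
  zero_mem' := by
    intro v hv
    simp
  add_mem' := by
    intro a b ha hb v hv
    simp only [Set.mem_setOf_eq] at *
    simp [Pi.add_apply, add_mul, Finset.sum_add_distrib, ha v hv, hb v hv]
  smul_mem' := by
    intro c a ha v hv
    simp only [Set.mem_setOf_eq] at *
    simp [Pi.smul_apply, smul_eq_mul, mul_assoc, ← Finset.mul_sum, ha v hv]

/-- The standard symmetric bilinear form on `F^n`. -/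
noncomputable def stdB (F : Type*) [Field F] (n : ℕ) :
    LinearMap.BilinForm F (Fin n → F) :=
  LinearMap.mk₂ F (fun x y => ∑ i, x i * y i)
    (by intro x x' y; simp [add_mul, Finset.sum_add_distrib])
    (by intro c x y; simp [mul_assoc, Finset.mul_sum])
    (by intro x y y'; simp [mul_add, Finset.sum_add_distrib])
    (by intro c x y; simp [Finset.mul_sum, mul_left_comm])

lemma stdB_apply {F : Type*} [Field F] {n : ℕ} (x y : Fin n → F) :
    stdB F n x y = ∑ i, x i * y i := rfl

lemma stdB_refl {F : Type*} [Field F] {n : ℕ} : (stdB F n).IsRefl := by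
  intro x y h
  simpa [stdB_apply, mul_comm] using h

lemma stdB_nondegenerate {F : Type*} [Field F] {n : ℕ} :
    (stdB F n).Nondegenerate := by
  refine ⟨?_, ?_⟩
  · intro x hx
    funext i
    have := hx (Pi.single i 1)
    simpa [stdB_apply, Pi.single_apply, mul_ite, Finset.sum_ite_eq'] using this
  · intro x hx
    funext i
    have := hx (Pi.single i 1)
    simpa [stdB_apply, Pi.single_apply, ite_mul, Finset.sum_ite_eq'] using this

lemma perp_eq {F : Type*} [Field F] {n : ℕ} (V : Submodule F (Fin n → F)) :
    perp V = (stdB F n).orthogonal V := by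
  ext x
  constructor
  · intro hx v hv
    simpa [LinearMap.BilinForm.IsOrtho, stdB_apply, mul_comm] using hx v hv
  · intro hx v hv
    have := hx v hv
    simpa [LinearMap.BilinForm.IsOrtho, stdB_apply, mul_comm] using this

/-- If `C` is an `a`-`(n,k,d)^c_q` covering Grassmannian code, then every
`(n - d - k + 1)`-dimensional subspace `W` of `F_q^n` is contained in at most
`a - 1` of the subspaces `V^⊥` with `V ∈ C`. -/
theorem stmt1 (q : ℕ) (hq : IsPrimePow q) (F : Type) [Field F] [Fintype F]
    (hF : Fintype.card F = q) (n k d a : ℕ)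
    (hn : 1 ≤ n) (hk : 1 ≤ k) (hd : 1 ≤ d) (ha : 2 ≤ a) (hdkn : d + k ≤ n)
    (C : Set (Submodule F (Fin n → F)))
    (hC : ∀ V ∈ C, Module.finrank F V = k)
    (hcov : ∀ S : Finset (Submodule F (Fin n → F)), ↑S ⊆ C → S.card = a →
      d + k ≤ Module.finrank F ↥(S.sup id)) :
    ∀ W : Submodule F (Fin n → F), Module.finrank F W = n - d - k + 1 →
      Set.ncard {V | V ∈ C ∧ W ≤ perp V} ≤ a - 1 := by
  intro W hW
  by_contra h
  push_neg at h
  have hle : a ≤ {V | V ∈ C ∧ W ≤ perp V}.ncard := by omega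
  obtain ⟨t, hts, htcard⟩ := Set.exists_subset_card_eq hle
  have htfin : t.Finite := by
    rcases t.finite_or_infinite with hf | hf
    · exact hf
    · rw [hf.ncard] at htcard; omega
  set S : Finset (Submodule F (Fin n → F)) := htfin.toFinset with hS
  have hScard : S.card = a := by
    rw [hS, ← Set.ncard_eq_toFinset_card t htfin, htcard]
  have hsub : (↑S : Set (Submodule F (Fin n → F))) ⊆ C := by
    intro V hV
    rw [hS, Set.Finite.coe_toFinset] at hV
    exact (hts hV).1
  have hdim := hcov S hsub hScard
  -- every member of S lies in the orthogonal of W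
  have hsup : S.sup id ≤ (stdB F n).orthogonal W := by
    apply Finset.sup_le
    intro V hV
    rw [hS, Set.Finite.mem_toFinset] at hV
    have hWV : W ≤ perp V := (hts hV).2
    intro x hx w hw
    exact hWV hw x hx
  have hmono : Module.finrank F ↥(S.sup id) ≤
      Module.finrank F ↥((stdB F n).orthogonal W) :=
    Submodule.finrank_mono hsup
  have horth : Module.finrank F ↥((stdB F n).orthogonal W) =
      Module.finrank F (Fin n → F) - Module.finrank F W :=
    LinearMap.BilinForm.finrank_orthogonal stdB_nondegenerate W
  rw [Module.finrank_fin_fun, hW] at horth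
  omega
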